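/- (Spectral manifolds) Let (θ, Φ) be an ergodic linear random dynamical system on ℝ^d whose dichotomy spectrum is Σ = [a₁, b₁] ∪ … ∪ [a_n, b_n] with −∞ ≤ a₁ ≤ b₁ < a₂ ≤ b₂ < … < a_n ≤ b_n ≤ +∞. Set P_{γ₀} := 0 and P_{γ_n} := Id, and for each i ∈ {1, …, n−1} choose γ_i ∈ (b_i, a_{i+1}) and an invariant projector P_{γ_i} of an exponential dichotomy of (θ, Φ) with growth rate γ_i. Define W_i(ω) := range P_{γ_i}(ω) ∩ ker P_{γ_{i−1}}(ω) for i ∈ {1, …, n}. Then for ℙ-almost every ω ∈ Ω: ℝ^d = W₁(ω) ⊕ … ⊕ W_n(ω), and W_i(ω) ≠ {0} for every i ∈ {1, …, n}. -/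

import Mathlib

open MeasureTheory Filter

noncomputable section

/-- A linear random dynamical system `(θ, Φ)` on `ℝ^d` over the probability space `(Ω, 𝓕, ℙ)`:
`θ` is a measure-preserving measurable dynamical system on `Ω`, and `Φ` is a measurable
cocycle over `θ` taking values in the invertible continuous linear maps of `ℝ^d`. -/
structure LinRDS {Ω : Type*} [MeasurableSpace Ω] (ℙ : Measure Ω) (d : ℕ) where
  θ : ℝ → Ω → Ω
  Φ : ℝ → Ω → EuclideanSpace ℝ (Fin d) →L[ℝ] EuclideanSpace ℝ (Fin d)
  θ_meas : Measurable fun p : ℝ × Ω => θ p.1 p.2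
  θ_zero : ∀ ω, θ 0 ω = ω
  θ_add : ∀ t s ω, θ (t + s) ω = θ t (θ s ω)
  θ_pres : ∀ t, MeasurePreserving (θ t) ℙ ℙ
  Φ_meas : ∀ x, Measurable fun p : ℝ × Ω => Φ p.1 p.2 x
  Φ_zero : ∀ ω, Φ 0 ω = 1
  Φ_cocycle : ∀ t s ω, Φ (t + s) ω = Φ t (θ s ω) * Φ s ω
  Φ_isUnit : ∀ t ω, IsUnit (Φ t ω)

variable {Ω : Type*} [MeasurableSpace Ω] {ℙ : Measure Ω} {d : ℕ}

/-- The base of the linear random dynamical system is ergodic. -/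
def LinRDS.IsErgodic (S : LinRDS ℙ d) : Prop :=
  ∀ A : Set Ω, MeasurableSet A → (∀ t, S.θ t ⁻¹' A = A) → ℙ A = 0 ∨ ℙ A = 1

/-- An invariant projector of a linear random dynamical system. -/
def LinRDS.InvProjector (S : LinRDS ℙ d)
    (P : Ω → EuclideanSpace ℝ (Fin d) →L[ℝ] EuclideanSpace ℝ (Fin d)) : Prop :=
  (∀ x, Measurable fun ω => P ω x) ∧ (∀ ω, P ω * P ω = P ω) ∧
    ∀ t ω, P (S.θ t ω) * S.Φ t ω = S.Φ t ω * P ω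

/-- `(θ, Φ)` admits an exponential dichotomy with growth rate `γ` and invariant projector `P`. -/
def LinRDS.IsED (S : LinRDS ℙ d) (γ : ℝ)
    (P : Ω → EuclideanSpace ℝ (Fin d) →L[ℝ] EuclideanSpace ℝ (Fin d)) : Prop :=
  S.InvProjector P ∧ ∃ a > (0:ℝ), ∃ K ≥ (1:ℝ), ∀ᵐ ω ∂ℙ,
    (∀ t : ℝ, 0 ≤ t → ‖S.Φ t ω * P ω‖ ≤ K * Real.exp ((γ - a) * t)) ∧
    (∀ t : ℝ, t ≤ 0 → ‖S.Φ t ω * (1 - P ω)‖ ≤ K * Real.exp ((γ + a) * t))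

/-- `(θ, Φ)` admits an exponential dichotomy with real growth rate `γ`. -/
def LinRDS.AdmitsED (S : LinRDS ℙ d) (γ : ℝ) : Prop :=
  ∃ P, S.IsED γ P

/-- `(θ, Φ)` admits an exponential dichotomy with extended-real growth rate `γ`; for
`γ = ±∞` this means an exponential dichotomy with some real growth rate whose projector
is a.s. the identity (resp. a.s. zero). -/
def LinRDS.AdmitsEDE (S : LinRDS ℙ d) (γ : EReal) : Prop :=
  (∃ g : ℝ, γ = (g : EReal) ∧ S.AdmitsED g) ∨
  (γ = ⊤ ∧ ∃ g : ℝ, ∃ P, S.IsED g P ∧ ∀ᵐ ω ∂ℙ, P ω = 1) ∨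
  (γ = ⊥ ∧ ∃ g : ℝ, ∃ P, S.IsED g P ∧ ∀ᵐ ω ∂ℙ, P ω = 0)

/-- The dichotomy spectrum of `(θ, Φ)`, a subset of the extended real line. -/
def LinRDS.spectrum (S : LinRDS ℙ d) : Set EReal :=
  {γ | ¬ S.AdmitsEDE γ}

/-- The rank of a continuous linear map on `ℝ^d`. -/
def clmRank (P : EuclideanSpace ℝ (Fin d) →L[ℝ] EuclideanSpace ℝ (Fin d)) : ℕ :=
  Module.finrank ℝ (LinearMap.range
    (P : EuclideanSpace ℝ (Fin d) →ₗ[ℝ] EuclideanSpace ℝ (Fin d)))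

section Helpers

variable {d : ℕ}

local notation "E" => EuclideanSpace ℝ (Fin d)

lemma clmRank_eq (f : E →L[ℝ] E) :
    clmRank f = Module.finrank ℝ (LinearMap.range (f : E →ₗ[ℝ] E)) := by
  rfl

lemma clmRank_zero : clmRank (0 : E →L[ℝ] E) = 0 := by
  rw [clmRank_eq]
  have : LinearMap.range ((0 : E →L[ℝ] E) : E →ₗ[ℝ] E) = ⊥ := by
    ext x
    simp [LinearMap.mem_range, eq_comm]
  rw [this]
  simp

lemma clmRank_one : clmRank (1 : E →L[ℝ] E) = d := by
  rw [clmRank_eq]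
  have : LinearMap.range ((1 : E →L[ℝ] E) : E →ₗ[ℝ] E) = ⊤ := by
    rw [LinearMap.range_eq_top]
    exact fun x => ⟨x, rfl⟩
  rw [this]
  simp [finrank_euclideanSpace_fin]

lemma clmRank_le (f : E →L[ℝ] E) : clmRank f ≤ d := by
  rw [clmRank_eq]
  have := Submodule.finrank_le (LinearMap.range (f : E →ₗ[ℝ] E))
  simpa [finrank_euclideanSpace_fin] using this

lemma trace_idem (f : E →L[ℝ] E) (h : f * f = f) :
    LinearMap.trace ℝ E (f : E →ₗ[ℝ] E) = (clmRank f : ℝ) := by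
  have hidem : (f : E →ₗ[ℝ] E) ∘ₗ (f : E →ₗ[ℝ] E) = (f : E →ₗ[ℝ] E) := by
    apply LinearMap.ext
    intro x
    have := congrArg (fun g : E →L[ℝ] E => g x) h
    simpa [ContinuousLinearMap.mul_apply] using this
  obtain ⟨p, hp⟩ := (LinearMap.isProj_iff_isIdempotentElem _).mpr hidem
  have hrange : p = LinearMap.range (f : E →ₗ[ℝ] E) := by
    apply le_antisymm
    · intro x hx
      exact ⟨x, hp.map_id x hx⟩
    · rintro x ⟨y, rfl⟩
      exact hp.map_mem y
  rw [hp.trace, clmRank_eq, hrange]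

end Helpers

section Helpers2

variable {d : ℕ}

local notation "E" => EuclideanSpace ℝ (Fin d)

lemma proj_eq {p q : E →L[ℝ] E} (hp : p * p = p) (hq : q * q = q)
    (h1 : q * p = p) (h2 : p * q = p) (hr : clmRank q ≤ clmRank p) : p = q := by
  have hle : LinearMap.range (p : E →ₗ[ℝ] E) ≤ LinearMap.range (q : E →ₗ[ℝ] E) := by
    rintro x ⟨y, rfl⟩
    refine ⟨p y, ?_⟩
    have := congrArg (fun g : E →L[ℝ] E => g y) h1
    simpa [ContinuousLinearMap.mul_apply] using this
  have hre : LinearMap.range (p : E →ₗ[ℝ] E) = LinearMap.range (q : E →ₗ[ℝ] E) :=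
    Submodule.eq_of_le_of_finrank_le hle hr
  have hfix : ∀ x ∈ LinearMap.range (p : E →ₗ[ℝ] E), p x = x := by
    rintro x ⟨y, rfl⟩
    have := congrArg (fun g : E →L[ℝ] E => g y) hp
    simpa [ContinuousLinearMap.mul_apply] using this
  have hpq : p * q = q := by
    apply ContinuousLinearMap.ext
    intro x
    have : q x ∈ LinearMap.range (p : E →ₗ[ℝ] E) := hre ▸ LinearMap.mem_range_self _ x
    simpa [ContinuousLinearMap.mul_apply] using hfix _ this
  rw [← hpq, h2]

lemma chain_internal (n : ℕ) (Q : ℕ → (E →L[ℝ] E))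
    (h0 : Q 0 = 0) (h1 : Q n = 1)
    (hidem : ∀ i, i ≤ n → Q i * Q i = Q i)
    (hcons : ∀ i, i < n → Q (i + 1) * Q i = Q i ∧ Q i * Q (i + 1) = Q i)
    (hrank : ∀ i, i < n → clmRank (Q i) < clmRank (Q (i + 1))) :
    DirectSum.IsInternal (fun i : Fin n =>
      LinearMap.range (Q ((i : ℕ) + 1) : E →ₗ[ℝ] E) ⊓ LinearMap.ker (Q (i : ℕ) : E →ₗ[ℝ] E)) ∧
    ∀ i : Fin n, LinearMap.range (Q ((i : ℕ) + 1) : E →ₗ[ℝ] E) ⊓ LinearMap.ker (Q (i : ℕ) : E →ₗ[ℝ] E) ≠ ⊥ := by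
  classical
  set W : Fin n → Submodule ℝ E := fun i =>
    LinearMap.range (Q ((i : ℕ) + 1) : E →ₗ[ℝ] E) ⊓ LinearMap.ker (Q (i : ℕ) : E →ₗ[ℝ] E) with hW
  have pair : ∀ i j, i ≤ j → j ≤ n → Q j * Q i = Q i ∧ Q i * Q j = Q i := by
    intro i j hij
    induction j, hij using Nat.le_induction with
    | base => intro hin; exact ⟨hidem i hin, hidem i hin⟩
    | succ j hij ih =>
      intro hjn
      obtain ⟨c1, c2⟩ := hcons j (by omega)
      obtain ⟨p1, p2⟩ := ih (by omega)
      constructor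
      · calc Q (j + 1) * Q i = Q (j + 1) * (Q j * Q i) := by rw [p1]
          _ = (Q (j + 1) * Q j) * Q i := by rw [mul_assoc]
          _ = Q j * Q i := by rw [c1]
          _ = Q i := p1
      · calc Q i * Q (j + 1) = (Q i * Q j) * Q (j + 1) := by rw [p2]
          _ = Q i * (Q j * Q (j + 1)) := by rw [mul_assoc]
          _ = Q i * Q j := by rw [c2]
          _ = Q i := p2
  have happly : ∀ (f g : E →L[ℝ] E) (x : E), f * g = g → f (g x) = g x := by
    intro f g x h
    have := congrArg (fun h : E →L[ℝ] E => h x) h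
    simpa [ContinuousLinearMap.mul_apply] using this
  have hmem : ∀ (i : Fin n) (x : E),
      x ∈ W i ↔ Q ((i : ℕ) + 1) x = x ∧ Q (i : ℕ) x = 0 := by
    intro i x
    rw [hW]
    simp only [Submodule.mem_inf, LinearMap.mem_range, LinearMap.mem_ker]
    constructor
    · rintro ⟨⟨y, rfl⟩, h2⟩
      exact ⟨happly _ _ y (hidem _ i.isLt), h2⟩
    · rintro ⟨hx1, hx2⟩
      exact ⟨⟨x, hx1⟩, hx2⟩
  set e : Fin n → (E →L[ℝ] E) := fun i => Q ((i : ℕ) + 1) - Q (i : ℕ) with he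
  have hWi : ∀ (i : Fin n) (x : E), x ∈ W i → e i x = x := by
    intro i x hx
    obtain ⟨hx1, hx2⟩ := (hmem i x).1 hx
    simp [he, ContinuousLinearMap.sub_apply, hx1, hx2]
  have hWj : ∀ (i j : Fin n), j ≠ i → ∀ x ∈ W j, e i x = 0 := by
    intro i j hji x hx
    obtain ⟨hx1, hx2⟩ := (hmem j x).1 hx
    rcases lt_or_gt_of_ne (fun h => hji (Fin.ext h) : (j : ℕ) ≠ (i : ℕ)) with hlt | hgt
    · -- j < i : Q i x = x and Q (i+1) x = x
      have e1 : Q (i : ℕ) x = x := by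
        conv_lhs => rw [← hx1]
        rw [happly _ _ x (pair ((j : ℕ) + 1) (i : ℕ) (by omega) (le_of_lt i.isLt)).1, hx1]
      have e2 : Q ((i : ℕ) + 1) x = x := by
        conv_lhs => rw [← hx1]
        rw [happly _ _ x (pair ((j : ℕ) + 1) ((i : ℕ) + 1) (by omega) i.isLt).1, hx1]
      simp [he, ContinuousLinearMap.sub_apply, e1, e2]
    · -- i < j : Q i x = 0 and Q (i+1) x = 0
      have e1 : Q (i : ℕ) x = 0 := by
        have := (pair (i : ℕ) (j : ℕ) (by omega) (le_of_lt j.isLt)).2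
        have := congrArg (fun h : E →L[ℝ] E => h x) this
        simpa [ContinuousLinearMap.mul_apply, hx2] using this.symm
      have e2 : Q ((i : ℕ) + 1) x = 0 := by
        have := (pair ((i : ℕ) + 1) (j : ℕ) (by omega) (le_of_lt j.isLt)).2
        have := congrArg (fun h : E →L[ℝ] E => h x) this
        simpa [ContinuousLinearMap.mul_apply, hx2] using this.symm
      simp [he, ContinuousLinearMap.sub_apply, e1, e2]
  have herange : ∀ (i : Fin n) (x : E), e i x ∈ W i := by
    intro i x
    rw [hmem]
    constructor
    · have hop : Q ((i : ℕ) + 1) * e i = e i := by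
        rw [he]
        simp only [mul_sub]
        rw [hidem _ i.isLt, (hcons (i : ℕ) i.isLt).1]
      exact happly _ _ x hop
    · have hop : Q (i : ℕ) * e i = 0 := by
        rw [he]
        simp only [mul_sub]
        rw [hidem _ (le_of_lt i.isLt), (hcons (i : ℕ) i.isLt).2, sub_self]
      have := congrArg (fun h : E →L[ℝ] E => h (e i x)) hop
      simpa [ContinuousLinearMap.mul_apply] using
        (congrArg (fun h : E →L[ℝ] E => h x) hop)
  have hsum : (∑ i : Fin n, e i) = 1 := by
    rw [he]
    rw [Fin.sum_univ_eq_sum_range (fun i => Q (i + 1) - Q i) n]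
    rw [Finset.sum_range_sub (fun i => Q i), h1, h0, sub_zero]
  have hsup : iSup W = ⊤ := by
    rw [eq_top_iff]
    intro x _
    have hx : x = ∑ i : Fin n, e i x := by
      have := congrArg (fun h : E →L[ℝ] E => h x) hsum
      simpa [ContinuousLinearMap.sum_apply] using this.symm
    rw [hx]
    exact Submodule.sum_mem _ fun i _ =>
      Submodule.mem_iSup_of_mem i (herange i x)
  have hindep : iSupIndep W := by
    rw [iSupIndep_def]
    intro i
    rw [Submodule.disjoint_def]
    intro x hxi hxsup
    have hker : (⨆ (j) (_ : j ≠ i), W j) ≤ LinearMap.ker (e i : E →ₗ[ℝ] E) := by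
      refine iSup_le fun j => iSup_le fun hj => ?_
      intro y hy
      exact LinearMap.mem_ker.2 (hWj i j hj y hy)
    have h0' : e i x = 0 := hker hxsup
    rw [← hWi i x hxi, h0']
  refine ⟨(DirectSum.isInternal_submodule_iff_iSupIndep_and_iSup_eq_top W).2 ⟨hindep, hsup⟩, ?_⟩
  intro i hbot
  have he0 : e i = 0 := by
    apply ContinuousLinearMap.ext
    intro x
    have := herange i x
    rw [show (LinearMap.range (Q ((i : ℕ) + 1) : E →ₗ[ℝ] E) ⊓ LinearMap.ker (Q (i : ℕ) : E →ₗ[ℝ] E)) = W i from rfl] at hbot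
    rw [hbot] at this
    simpa using this
  have hQeq : Q ((i : ℕ) + 1) = Q (i : ℕ) := by
    apply sub_eq_zero.mp
    simpa [he] using he0
  have := hrank (i : ℕ) i.isLt
  rw [hQeq] at this
  exact lt_irrefl _ this

end Helpers2

section DynHelpers

variable {Ω : Type*} [MeasurableSpace Ω] {ℙ : Measure Ω} {d : ℕ}

local notation "E" => EuclideanSpace ℝ (Fin d)

/-- Almost every orbit spends almost all its time in a full-measure measurable set. -/
lemma LinRDS.good_orbit (S : LinRDS ℙ d) [IsProbabilityMeasure ℙ] {G : Set Ω}
    (hGm : MeasurableSet G) (hG1 : ∀ᵐ ω ∂ℙ, ω ∈ G) :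
    ∀ᵐ ω ∂ℙ, ∀ᵐ t ∂(volume : Measure ℝ), S.θ t ω ∈ G := by
  have hGc : ℙ Gᶜ = 0 := by
    have := hG1
    rw [MeasureTheory.ae_iff] at this
    simpa [Set.compl_def] using this
  have hθ2 : Measurable fun p : Ω × ℝ => S.θ p.2 p.1 :=
    S.θ_meas.comp measurable_swap
  have hθ1 : Measurable fun p : ℝ × Ω => S.θ p.1 p.2 := S.θ_meas
  set s : Set (Ω × ℝ) := {p : Ω × ℝ | S.θ p.2 p.1 ∈ Gᶜ} with hs
  have hsm : MeasurableSet s := hθ2 hGm.compl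
  have hs' : Prod.swap ⁻¹' s = {p : ℝ × Ω | S.θ p.1 p.2 ∈ Gᶜ} := rfl
  have hs'm : MeasurableSet (Prod.swap ⁻¹' s) := measurable_swap hsm
  have hnull : (ℙ.prod (volume : Measure ℝ)) s = 0 := by
    have hswap : (ℙ.prod (volume : Measure ℝ)) s
        = ((volume : Measure ℝ).prod ℙ) (Prod.swap ⁻¹' s) := by
      rw [← MeasureTheory.Measure.prod_swap]
      rw [MeasureTheory.Measure.map_apply measurable_swap hsm]
    rw [hswap]
    rw [MeasureTheory.Measure.prod_apply hs'm]
    have : ∀ t : ℝ, ℙ (Prod.mk t ⁻¹' (Prod.swap ⁻¹' s)) = 0 := by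
      intro t
      have : Prod.mk t ⁻¹' (Prod.swap ⁻¹' s) = S.θ t ⁻¹' Gᶜ := rfl
      rw [this, (S.θ_pres t).measure_preimage hGm.compl.nullMeasurableSet]
      exact hGc
    simp [this]
  have := (MeasureTheory.Measure.measure_prod_null hsm).1 hnull
  filter_upwards [this] with ω hω
  rw [MeasureTheory.ae_iff]
  exact hω

end DynHelpers

section DynHelpers2

variable {Ω : Type*} [MeasurableSpace Ω] {ℙ : Measure Ω} {d : ℕ}

local notation "E" => EuclideanSpace ℝ (Fin d)

lemma exists_ge_of_ae {p : ℝ → Prop} (h : ∀ᵐ t ∂(volume : Measure ℝ), p t) (T : ℝ) :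
    ∃ t, T ≤ t ∧ p t := by
  by_contra hc
  push_neg at hc
  have hsub : Set.Ici T ⊆ {t : ℝ | ¬ p t} := fun t ht => hc t ht
  have h0 : (volume : Measure ℝ) {t : ℝ | ¬ p t} = 0 := by
    rw [← MeasureTheory.ae_iff]; exact h
  have := measure_mono (μ := (volume : Measure ℝ)) hsub
  rw [h0, Real.volume_Ici] at this
  simp at this

lemma exists_le_of_ae {p : ℝ → Prop} (h : ∀ᵐ t ∂(volume : Measure ℝ), p t) (T : ℝ) :
    ∃ t, t ≤ T ∧ p t := by
  by_contra hc
  push_neg at hc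
  have hsub : Set.Iic T ⊆ {t : ℝ | ¬ p t} := fun t ht => hc t ht
  have h0 : (volume : Measure ℝ) {t : ℝ | ¬ p t} = 0 := by
    rw [← MeasureTheory.ae_iff]; exact h
  have := measure_mono (μ := (volume : Measure ℝ)) hsub
  rw [h0, Real.volume_Iic] at this
  simp at this

/-- The key comparison of invariant projectors of exponential dichotomies with ordered
growth rates. -/
lemma LinRDS.nest (S : LinRDS ℙ d) [IsProbabilityMeasure ℙ]
    {γ γ' : ℝ} {P Q : Ω → E →L[ℝ] E}
    (hP : S.IsED γ P) (hQ : S.IsED γ' Q) (hle : γ ≤ γ') :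
    ∀ᵐ ω ∂ℙ, Q ω * P ω = P ω ∧ P ω * Q ω = P ω := by
  obtain ⟨hPproj, aa, ha, K, hK, hPa⟩ := hP
  obtain ⟨hQproj, aa', ha', K', hK', hQa⟩ := hQ
  have hK0 : (0:ℝ) < K := by linarith
  have hK'0 : (0:ℝ) < K' := by linarith
  -- the good measurable set
  set BB : Ω → Prop := fun ω =>
    ((∀ t : ℝ, 0 ≤ t → ‖S.Φ t ω * P ω‖ ≤ K * Real.exp ((γ - aa) * t)) ∧
      (∀ t : ℝ, t ≤ 0 → ‖S.Φ t ω * (1 - P ω)‖ ≤ K * Real.exp ((γ + aa) * t))) ∧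
    ((∀ t : ℝ, 0 ≤ t → ‖S.Φ t ω * Q ω‖ ≤ K' * Real.exp ((γ' - aa') * t)) ∧
      (∀ t : ℝ, t ≤ 0 → ‖S.Φ t ω * (1 - Q ω)‖ ≤ K' * Real.exp ((γ' + aa') * t))) with hBB
  have hBBa : ∀ᵐ ω ∂ℙ, BB ω := hPa.and hQa
  set N : Set Ω := {ω | ¬ BB ω} with hN
  have hN0 : ℙ N = 0 := by rw [← MeasureTheory.ae_iff]; exact hBBa
  set G : Set Ω := (MeasureTheory.toMeasurable ℙ N)ᶜ with hG
  have hGm : MeasurableSet G := (measurableSet_toMeasurable ℙ N).compl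
  have hG1 : ∀ᵐ ω ∂ℙ, ω ∈ G := by
    rw [MeasureTheory.ae_iff]
    have : {ω | ¬ ω ∈ G} = MeasureTheory.toMeasurable ℙ N := by
      ext ω; simp [hG]
    rw [this, measure_toMeasurable]
    exact hN0
  have hGgood : ∀ ω ∈ G, BB ω := by
    intro ω hω
    by_contra hc
    exact hω (MeasureTheory.subset_toMeasurable ℙ N hc)
  filter_upwards [hG1, S.good_orbit hGm hG1] with ω hωG hωt
  have hBP := (hGgood ω hωG).1
  have hBQ := (hGgood ω hωG).2
  constructor
  · -- Q ω * P ω = P ω, via (1 - Q ω) * P ω = 0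
    have hzero : (1 - Q ω) * P ω = 0 := by
      rw [← norm_le_zero_iff]
      have key : ∀ ε : ℝ, 0 < ε → ‖(1 - Q ω) * P ω‖ ≤ ε := by
        intro ε hε
        set C1 : ℝ := K' * (K' * K) with hC1
        have hC1pos : 0 < C1 := by positivity
        set c1 : ℝ := (γ - γ') - (aa + aa') with hc1
        have hc1neg : c1 < 0 := by simp only [hc1]; linarith
        set T : ℝ := max 0 (Real.log (ε / C1) / c1) with hT
        obtain ⟨t, hTt, hθG⟩ := exists_ge_of_ae hωt T
        have ht0 : 0 ≤ t := le_trans (le_max_left _ _) hTt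
        have hexpb : C1 * Real.exp (c1 * t) ≤ ε := by
          have h1 : Real.log (ε / C1) / c1 ≤ t := le_trans (le_max_right _ _) hTt
          have h2 : c1 * t ≤ Real.log (ε / C1) := by
            calc c1 * t ≤ c1 * (Real.log (ε / C1) / c1) :=
                  mul_le_mul_of_nonpos_left h1 (le_of_lt hc1neg)
              _ = Real.log (ε / C1) := by
                  rw [mul_comm, div_mul_cancel₀ _ (ne_of_lt hc1neg)]
          have h3 : Real.exp (c1 * t) ≤ ε / C1 := by
            calc Real.exp (c1 * t) ≤ Real.exp (Real.log (ε / C1)) := Real.exp_le_exp.2 h2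
              _ = ε / C1 := Real.exp_log (by positivity)
          calc C1 * Real.exp (c1 * t) ≤ C1 * (ε / C1) :=
                mul_le_mul_of_nonneg_left h3 (le_of_lt hC1pos)
            _ = ε := by field_simp
        have hBQ' := (hGgood _ hθG).2
        set F : E →L[ℝ] E := S.Φ t ω with hF
        set F' : E →L[ℝ] E := S.Φ (-t) (S.θ t ω) with hF'
        set q : E →L[ℝ] E := Q ω with hq
        set q' : E →L[ℝ] E := Q (S.θ t ω) with hq'
        set p : E →L[ℝ] E := P ω with hp
        have f1 : F' * F = 1 := by
          rw [hF', hF]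
          have := S.Φ_cocycle (-t) t ω
          rw [neg_add_cancel, S.Φ_zero] at this
          exact this.symm
        have f2 : q' * F = F * q := hQproj.2.2 t ω
        have f3 : (1 - q') * (1 - q') = 1 - q' := by
          have := hQproj.2.1 (S.θ t ω)
          rw [sub_mul, mul_sub, mul_sub, one_mul, mul_one, this]
          abel
        have f4 : (1 - q') * F = F * (1 - q) := by
          rw [sub_mul, mul_sub, one_mul, mul_one, f2]
        have hid : (1 - q) * p = (F' * (1 - q')) * ((1 - q') * (F * p)) := by
          have h : (F' * (1 - q')) * ((1 - q') * (F * p)) = (1 - q) * p := by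
            calc (F' * (1 - q')) * ((1 - q') * (F * p))
                = F' * (((1 - q') * (1 - q')) * (F * p)) := by
                  rw [mul_assoc, ← mul_assoc (1 - q')]
              _ = F' * ((1 - q') * (F * p)) := by rw [f3]
              _ = F' * (((1 - q') * F) * p) := by rw [← mul_assoc (1 - q')]
              _ = F' * ((F * (1 - q)) * p) := by rw [f4]
              _ = (F' * F) * ((1 - q) * p) := by
                  rw [mul_assoc F, ← mul_assoc F']
              _ = (1 - q) * p := by rw [f1, one_mul]
          exact h.symm
        have b1 : ‖F' * (1 - q')‖ ≤ K' * Real.exp ((γ' + aa') * (-t)) :=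
          hBQ'.2 (-t) (by linarith)
        have b2 : ‖(1 : E →L[ℝ] E) - q'‖ ≤ K' := by
          have h2 := hBQ'.2 0 le_rfl
          rw [S.Φ_zero, one_mul, mul_zero, Real.exp_zero, mul_one] at h2
          exact h2
        have b3 : ‖F * p‖ ≤ K * Real.exp ((γ - aa) * t) :=
          hBP.1 t ht0
        have hnn : (0:ℝ) ≤ K * Real.exp ((γ - aa) * t) := by positivity
        have bndB : ‖(1 - q') * (F * p)‖ ≤ K' * (K * Real.exp ((γ - aa) * t)) :=
          le_trans (norm_mul_le _ _) (mul_le_mul b2 b3 (norm_nonneg _) (by linarith))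
        have bnd : ‖(1 - q) * p‖ ≤
            (K' * Real.exp ((γ' + aa') * (-t))) * (K' * (K * Real.exp ((γ - aa) * t))) := by
          rw [hid]
          exact le_trans (norm_mul_le _ _)
            (mul_le_mul b1 bndB (norm_nonneg _) (by positivity))
        have hsimp : (K' * Real.exp ((γ' + aa') * (-t))) * (K' * (K * Real.exp ((γ - aa) * t)))
            = C1 * Real.exp (c1 * t) := by
          have e : Real.exp ((γ' + aa') * (-t)) * Real.exp ((γ - aa) * t)
              = Real.exp (c1 * t) := by
            rw [← Real.exp_add]
            congr 1
            rw [hc1]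
            ring
          calc (K' * Real.exp ((γ' + aa') * (-t))) * (K' * (K * Real.exp ((γ - aa) * t)))
              = (K' * (K' * K)) * (Real.exp ((γ' + aa') * (-t)) * Real.exp ((γ - aa) * t)) := by
                ring
            _ = C1 * Real.exp (c1 * t) := by rw [e, ← hC1]
        rw [hsimp] at bnd
        exact le_trans bnd hexpb
      by_contra hc
      push_neg at hc
      have := key (‖(1 - Q ω) * P ω‖ / 2) (by linarith)
      linarith
    have h' : P ω - Q ω * P ω = 0 := by
      have := hzero
      rwa [sub_mul, one_mul] at this
    exact (sub_eq_zero.mp h').symm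
  · -- P ω * Q ω = P ω, via P ω * (1 - Q ω) = 0
    have hzero : P ω * (1 - Q ω) = 0 := by
      rw [← norm_le_zero_iff]
      have key : ∀ ε : ℝ, 0 < ε → ‖P ω * (1 - Q ω)‖ ≤ ε := by
        intro ε hε
        set C2 : ℝ := K * (K * K') with hC2
        have hC2pos : 0 < C2 := by positivity
        set c2 : ℝ := (γ' - γ) + (aa + aa') with hc2
        have hc2pos : 0 < c2 := by simp only [hc2]; linarith
        set T : ℝ := min 0 (Real.log (ε / C2) / c2) with hT
        obtain ⟨t, hTt, hθG⟩ := exists_le_of_ae hωt T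
        have ht0 : t ≤ 0 := le_trans hTt (min_le_left _ _)
        have hexpb : C2 * Real.exp (c2 * t) ≤ ε := by
          have h1 : t ≤ Real.log (ε / C2) / c2 := le_trans hTt (min_le_right _ _)
          have h2 : c2 * t ≤ Real.log (ε / C2) := by
            calc c2 * t ≤ c2 * (Real.log (ε / C2) / c2) :=
                  mul_le_mul_of_nonneg_left h1 (le_of_lt hc2pos)
              _ = Real.log (ε / C2) := by
                  rw [mul_comm, div_mul_cancel₀ _ (ne_of_gt hc2pos)]
          have h3 : Real.exp (c2 * t) ≤ ε / C2 := by
            calc Real.exp (c2 * t) ≤ Real.exp (Real.log (ε / C2)) := Real.exp_le_exp.2 h2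
              _ = ε / C2 := Real.exp_log (by positivity)
          calc C2 * Real.exp (c2 * t) ≤ C2 * (ε / C2) :=
                mul_le_mul_of_nonneg_left h3 (le_of_lt hC2pos)
            _ = ε := by field_simp
        have hBP' := (hGgood _ hθG).1
        set F : E →L[ℝ] E := S.Φ t ω with hF
        set F' : E →L[ℝ] E := S.Φ (-t) (S.θ t ω) with hF'
        set q : E →L[ℝ] E := Q ω with hq
        set p' : E →L[ℝ] E := P (S.θ t ω) with hp'
        set p : E →L[ℝ] E := P ω with hp
        have f1 : F' * F = 1 := by
          rw [hF', hF]
          have := S.Φ_cocycle (-t) t ω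
          rw [neg_add_cancel, S.Φ_zero] at this
          exact this.symm
        have f2p : p' * F = F * p := hPproj.2.2 t ω
        have f3p : p' * p' = p' := hPproj.2.1 (S.θ t ω)
        have hid : p * (1 - q) = (F' * p') * (p' * (F * (1 - q))) := by
          have h : (F' * p') * (p' * (F * (1 - q))) = p * (1 - q) := by
            calc (F' * p') * (p' * (F * (1 - q)))
                = F' * ((p' * p') * (F * (1 - q))) := by
                  rw [mul_assoc, ← mul_assoc p']
              _ = F' * (p' * (F * (1 - q))) := by rw [f3p]
              _ = F' * ((p' * F) * (1 - q)) := by rw [← mul_assoc p']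
              _ = F' * ((F * p) * (1 - q)) := by rw [f2p]
              _ = (F' * F) * (p * (1 - q)) := by
                  rw [mul_assoc F, ← mul_assoc F']
              _ = p * (1 - q) := by rw [f1, one_mul]
          exact h.symm
        have b1 : ‖F' * p'‖ ≤ K * Real.exp ((γ - aa) * (-t)) :=
          hBP'.1 (-t) (by linarith)
        have b2 : ‖p'‖ ≤ K := by
          have h2 := hBP'.1 0 le_rfl
          rw [S.Φ_zero, one_mul, mul_zero, Real.exp_zero, mul_one] at h2
          exact h2
        have b3 : ‖F * (1 - q)‖ ≤ K' * Real.exp ((γ' + aa') * t) :=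
          hBQ.2 t ht0
        have bndB : ‖p' * (F * (1 - q))‖ ≤ K * (K' * Real.exp ((γ' + aa') * t)) :=
          le_trans (norm_mul_le _ _) (mul_le_mul b2 b3 (norm_nonneg _) (by linarith))
        have bnd : ‖p * (1 - q)‖ ≤
            (K * Real.exp ((γ - aa) * (-t))) * (K * (K' * Real.exp ((γ' + aa') * t))) := by
          rw [hid]
          exact le_trans (norm_mul_le _ _)
            (mul_le_mul b1 bndB (norm_nonneg _) (by positivity))
        have hsimp : (K * Real.exp ((γ - aa) * (-t))) * (K * (K' * Real.exp ((γ' + aa') * t)))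
            = C2 * Real.exp (c2 * t) := by
          have e : Real.exp ((γ - aa) * (-t)) * Real.exp ((γ' + aa') * t)
              = Real.exp (c2 * t) := by
            rw [← Real.exp_add]
            congr 1
            rw [hc2]
            ring
          calc (K * Real.exp ((γ - aa) * (-t))) * (K * (K' * Real.exp ((γ' + aa') * t)))
              = (K * (K * K')) * (Real.exp ((γ - aa) * (-t)) * Real.exp ((γ' + aa') * t)) := by
                ring
            _ = C2 * Real.exp (c2 * t) := by rw [e, ← hC2]
        rw [hsimp] at bnd
        exact le_trans bnd hexpb
      by_contra hc
      push_neg at hc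
      have := key (‖P ω * (1 - Q ω)‖ / 2) (by linarith)
      linarith
    have h' : P ω - P ω * Q ω = 0 := by
      have := hzero
      rwa [mul_sub, mul_one] at this
    exact (sub_eq_zero.mp h').symm

end DynHelpers2

section RankConst

variable {Ω : Type*} [MeasurableSpace Ω] {ℙ : Measure Ω} {d : ℕ}

local notation "E" => EuclideanSpace ℝ (Fin d)

/-- The rank of an invariant projector of an ergodic system is a.s. constant. -/
lemma LinRDS.rank_const (S : LinRDS ℙ d) [IsProbabilityMeasure ℙ] (hErg : S.IsErgodic)
    {P : Ω → E →L[ℝ] E} (hproj : S.InvProjector P) :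
    ∃ k, ∀ᵐ ω ∂ℙ, clmRank (P ω) = k := by
  classical
  set r : Ω → ℝ := fun ω => LinearMap.trace ℝ E ((P ω : E →ₗ[ℝ] E)) with hr
  have hrRank : ∀ ω, r ω = (clmRank (P ω) : ℝ) := fun ω => trace_idem _ (hproj.2.1 ω)
  -- measurability of r
  have hrMeas : Measurable r := by
    set b : Module.Basis (Fin d) ℝ E := (PiLp.basisFun 2 ℝ (Fin d)) with hb
    have hcont : ∀ i : Fin d, Continuous fun x : E => b.repr x i := by
      intro i
      exact LinearMap.continuous_of_finiteDimensional
        ((Finsupp.lapply i).comp (b.repr.toLinearMap))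
    have hentry : ∀ i : Fin d, Measurable fun ω => b.repr ((P ω) (b i)) i := by
      intro i
      exact (hcont i).measurable.comp (hproj.1 (b i))
    have : r = fun ω => ∑ i : Fin d, b.repr ((P ω) (b i)) i := by
      funext ω
      show LinearMap.trace ℝ E ((P ω : E →ₗ[ℝ] E)) = ∑ i : Fin d, b.repr ((P ω) (b i)) i
      rw [LinearMap.trace_eq_matrix_trace ℝ b]
      rw [Matrix.trace]
      congr 1
      funext i
      rw [Matrix.diag, LinearMap.toMatrix_apply]
      rfl
    rw [this]
    exact Finset.measurable_sum _ fun i _ => hentry i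
  -- invariance of r
  have hrInv : ∀ t ω, r (S.θ t ω) = r ω := by
    intro t ω
    obtain ⟨u, hu⟩ := S.Φ_isUnit t ω
    have hinv1 : S.Φ t ω * (↑u⁻¹ : E →L[ℝ] E) = 1 := by rw [← hu]; exact u.mul_inv
    have hinv2 : (↑u⁻¹ : E →L[ℝ] E) * S.Φ t ω = 1 := by rw [← hu]; exact u.inv_mul
    have hPθ : P (S.θ t ω) = S.Φ t ω * P ω * (↑u⁻¹ : E →L[ℝ] E) := by
      have h := hproj.2.2 t ω
      calc P (S.θ t ω) = P (S.θ t ω) * (S.Φ t ω * (↑u⁻¹ : E →L[ℝ] E)) := by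
            rw [hinv1, mul_one]
        _ = (P (S.θ t ω) * S.Φ t ω) * (↑u⁻¹ : E →L[ℝ] E) := by rw [mul_assoc]
        _ = S.Φ t ω * P ω * (↑u⁻¹ : E →L[ℝ] E) := by rw [h]
    rw [hr]
    simp only [hPθ]
    have hcoe : ((S.Φ t ω * P ω * (↑u⁻¹ : E →L[ℝ] E) : E →L[ℝ] E) : E →ₗ[ℝ] E)
        = ((S.Φ t ω : E →ₗ[ℝ] E) * (P ω : E →ₗ[ℝ] E)) * ((↑u⁻¹ : E →L[ℝ] E) : E →ₗ[ℝ] E) := by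
      rfl
    rw [hcoe, LinearMap.trace_mul_comm]
    have hcoe2 : ((↑u⁻¹ : E →L[ℝ] E) : E →ₗ[ℝ] E) * ((S.Φ t ω : E →ₗ[ℝ] E) * (P ω : E →ₗ[ℝ] E))
        = (((↑u⁻¹ : E →L[ℝ] E) * S.Φ t ω : E →L[ℝ] E) : E →ₗ[ℝ] E) * (P ω : E →ₗ[ℝ] E) := by
      rw [← mul_assoc]
      rfl
    rw [hcoe2, hinv2]
    rw [show ((1 : E →L[ℝ] E) : E →ₗ[ℝ] E) = 1 from rfl, one_mul]
  -- the invariant sets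
  set A : ℕ → Set Ω := fun k => {ω | r ω = (k : ℝ)} with hA
  have hAmeas : ∀ k, MeasurableSet (A k) := fun k => hrMeas (measurableSet_singleton _)
  have hAinv : ∀ k t, S.θ t ⁻¹' A k = A k := by
    intro k t
    ext ω
    simp only [hA, Set.mem_preimage, Set.mem_setOf_eq, hrInv]
  have hA01 : ∀ k, ℙ (A k) = 0 ∨ ℙ (A k) = 1 := fun k =>
    hErg (A k) (hAmeas k) (fun t => hAinv k t)
  have hcover : (Set.univ : Set Ω) ⊆ ⋃ k ∈ Finset.range (d + 1), A k := by
    intro ω _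
    have h1 : r ω = (clmRank (P ω) : ℝ) := hrRank ω
    have h2 : clmRank (P ω) < d + 1 := Nat.lt_succ_of_le (clmRank_le _)
    exact Set.mem_biUnion (Finset.mem_range.2 h2) h1
  have hex : ∃ k, ℙ (A k) = 1 := by
    by_contra hc
    push_neg at hc
    have h0 : ∀ k, ℙ (A k) = 0 := fun k => (hA01 k).resolve_right (hc k)
    have : ℙ (Set.univ : Set Ω) ≤ ∑ k ∈ Finset.range (d + 1), ℙ (A k) :=
      le_trans (measure_mono hcover) (measure_biUnion_finset_le _ _)
    simp only [h0, Finset.sum_const_zero, measure_univ] at this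
    exact one_ne_zero (le_antisymm this zero_le : (1 : ENNReal) = 0)
  obtain ⟨k, hk⟩ := hex
  refine ⟨k, ?_⟩
  have hae : ∀ᵐ ω ∂ℙ, ω ∈ A k := by
    rw [MeasureTheory.ae_iff]
    have hcompl : ℙ (A k)ᶜ = 0 := by
      rw [measure_compl (hAmeas k) (measure_ne_top ℙ _), hk, measure_univ]
      simp
    have : {ω | ¬ ω ∈ A k} = (A k)ᶜ := rfl
    rw [this]
    exact hcompl
  filter_upwards [hae] with ω hω
  have : (clmRank (P ω) : ℝ) = (k : ℝ) := by rw [← hrRank ω]; exact hω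
  exact_mod_cast this

end RankConst

section EDHelpers

variable {Ω : Type*} [MeasurableSpace Ω] {ℙ : Measure Ω} {d : ℕ}

local notation "E" => EuclideanSpace ℝ (Fin d)

lemma LinRDS.isED_congr (S : LinRDS ℙ d) {γ : ℝ} {P Q : Ω → E →L[ℝ] E}
    (hQ : S.IsED γ Q) (hP : S.InvProjector P) (heq : ∀ᵐ ω ∂ℙ, P ω = Q ω) :
    S.IsED γ P := by
  obtain ⟨_, a, ha, K, hK, hae⟩ := hQ
  refine ⟨hP, a, ha, K, hK, ?_⟩
  filter_upwards [hae, heq] with ω hω he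
  rw [he]
  exact hω

lemma LinRDS.admitsED_between (S : LinRDS ℙ d) {γ1 γ2 g : ℝ} {P : Ω → E →L[ℝ] E}
    (h1 : S.IsED γ1 P) (h2 : S.IsED γ2 P) (hg1 : γ1 ≤ g) (hg2 : g ≤ γ2) :
    S.AdmitsED g := by
  obtain ⟨hproj, a1, ha1, K1, hK1, hae1⟩ := h1
  obtain ⟨_, a2, ha2, K2, hK2, hae2⟩ := h2
  have hKm : (1:ℝ) ≤ max K1 K2 := le_trans hK1 (le_max_left _ _)
  have hKm0 : (0:ℝ) ≤ max K1 K2 := by linarith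
  refine ⟨P, hproj, min a1 a2, lt_min ha1 ha2, max K1 K2, hKm, ?_⟩
  filter_upwards [hae1, hae2] with ω hω1 hω2
  constructor
  · intro t ht
    have hexp : (γ1 - a1) * t ≤ (g - min a1 a2) * t :=
      mul_le_mul_of_nonneg_right (by
        have := min_le_left a1 a2
        linarith) ht
    calc ‖S.Φ t ω * P ω‖ ≤ K1 * Real.exp ((γ1 - a1) * t) := hω1.1 t ht
      _ ≤ max K1 K2 * Real.exp ((g - min a1 a2) * t) :=
        mul_le_mul (le_max_left _ _) (Real.exp_le_exp.2 hexp) (Real.exp_pos _).le hKm0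
  · intro t ht
    have hexp : (γ2 + a2) * t ≤ (g + min a1 a2) * t :=
      mul_le_mul_of_nonpos_right (by
        have := min_le_right a1 a2
        linarith) ht
    calc ‖S.Φ t ω * (1 - P ω)‖ ≤ K2 * Real.exp ((γ2 + a2) * t) := hω2.2 t ht
      _ ≤ max K1 K2 * Real.exp ((g + min a1 a2) * t) :=
        mul_le_mul (le_max_right _ _) (Real.exp_le_exp.2 hexp) (Real.exp_pos _).le hKm0

lemma LinRDS.admitsED_lt_of_ae_zero (S : LinRDS ℙ d) {γ : ℝ} {P : Ω → E →L[ℝ] E}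
    (h : S.IsED γ P) (h0 : ∀ᵐ ω ∂ℙ, P ω = 0) {g : ℝ} (hg : g < γ) :
    S.AdmitsED g := by
  obtain ⟨hproj, a, ha, K, hK, hae⟩ := h
  have hK0 : (0:ℝ) ≤ K := by linarith
  refine ⟨P, hproj, min a (γ - g), lt_min ha (by linarith), K, hK, ?_⟩
  filter_upwards [hae, h0] with ω hω hω0
  constructor
  · intro t ht
    rw [hω0, mul_zero, norm_zero]
    exact mul_nonneg hK0 (Real.exp_pos _).le
  · intro t ht
    have hexp : (γ + a) * t ≤ (g + min a (γ - g)) * t :=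
      mul_le_mul_of_nonpos_right (by
        have := min_le_right a (γ - g)
        linarith) ht
    calc ‖S.Φ t ω * (1 - P ω)‖ ≤ K * Real.exp ((γ + a) * t) := hω.2 t ht
      _ ≤ K * Real.exp ((g + min a (γ - g)) * t) :=
        mul_le_mul_of_nonneg_left (Real.exp_le_exp.2 hexp) hK0

lemma LinRDS.admitsED_gt_of_ae_one (S : LinRDS ℙ d) {γ : ℝ} {P : Ω → E →L[ℝ] E}
    (h : S.IsED γ P) (h1 : ∀ᵐ ω ∂ℙ, P ω = 1) {g : ℝ} (hg : γ < g) :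
    S.AdmitsED g := by
  obtain ⟨hproj, a, ha, K, hK, hae⟩ := h
  have hK0 : (0:ℝ) ≤ K := by linarith
  refine ⟨P, hproj, min a (g - γ), lt_min ha (by linarith), K, hK, ?_⟩
  filter_upwards [hae, h1] with ω hω hω1
  constructor
  · intro t ht
    have hexp : (γ - a) * t ≤ (g - min a (g - γ)) * t :=
      mul_le_mul_of_nonneg_right (by
        have := min_le_right a (g - γ)
        linarith) ht
    calc ‖S.Φ t ω * P ω‖ ≤ K * Real.exp ((γ - a) * t) := hω.1 t ht
      _ ≤ K * Real.exp ((g - min a (g - γ)) * t) :=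
        mul_le_mul_of_nonneg_left (Real.exp_le_exp.2 hexp) hK0
  · intro t ht
    rw [hω1, sub_self, mul_zero, norm_zero]
    exact mul_nonneg hK0 (Real.exp_pos _).le

lemma LinRDS.admitsEDE_dim_zero (S : LinRDS ℙ 0) [IsProbabilityMeasure ℙ] (γ : EReal) :
    S.AdmitsEDE γ := by
  haveI hsE : Subsingleton (EuclideanSpace ℝ (Fin 0)) :=
    ⟨fun x y => PiLp.ext fun i => Fin.elim0 i⟩
  have hsub : ∀ f g : EuclideanSpace ℝ (Fin 0) →L[ℝ] EuclideanSpace ℝ (Fin 0), f = g :=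
    fun f g => ContinuousLinearMap.ext fun x => Subsingleton.elim _ _
  have hED0 : ∀ g : ℝ, S.IsED g (fun _ => 0) := by
    intro g
    refine ⟨⟨fun x => measurable_const, fun ω => by rw [mul_zero],
      fun t ω => by rw [zero_mul, mul_zero]⟩, 1, one_pos, 1, le_refl _, ?_⟩
    filter_upwards with ω
    constructor
    · intro t ht
      rw [mul_zero, norm_zero]
      exact mul_nonneg zero_le_one (Real.exp_pos _).le
    · intro t ht
      rw [hsub (S.Φ t ω * (1 - 0)) 0, norm_zero]
      exact mul_nonneg zero_le_one (Real.exp_pos _).le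
  by_cases hb : γ = ⊥
  · exact Or.inr (Or.inr ⟨hb, 0, _, hED0 0, Filter.Eventually.of_forall fun ω => rfl⟩)
  by_cases ht : γ = ⊤
  · exact Or.inr (Or.inl ⟨ht, 0, _, hED0 0, Filter.Eventually.of_forall fun ω => hsub 0 1⟩)
  · exact Or.inl ⟨γ.toReal, (EReal.coe_toReal ht hb).symm, _, hED0 γ.toReal⟩

end EDHelpers

/-- **Spectral manifolds.** Suppose the dichotomy spectrum of an ergodic linear
random dynamical system is `Σ = [a 0, b 0] ∪ … ∪ [a (n-1), b (n-1)]` (indices `0, …, n-1`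
here correspond to `1, …, n` in the paper). With `P 0 ≡ 0`, `P n ≡ Id`, and `P i` (for
`0 < i < n`) a projector of an exponential dichotomy with growth rate `γ i ∈ (b (i-1), a i)`,
the spectral manifolds `W i ω = range (P i ω) ∩ ker (P (i-1) ω)`, `i = 1, …, n`, almost
surely form a Whitney sum decomposition of `ℝ^d` into nontrivial subspaces. -/
theorem spectral_manifolds
    {Ω : Type*} [MeasurableSpace Ω] {ℙ : Measure Ω} [IsProbabilityMeasure ℙ] {d : ℕ}
    (S : LinRDS ℙ d) (hErg : S.IsErgodic)
    (n : ℕ) (hn : 1 ≤ n) (a b : ℕ → EReal)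
    (hab : ∀ i < n, a i ≤ b i)
    (hba : ∀ i, i + 1 < n → b i < a (i + 1))
    (hspec : S.spectrum = ⋃ i ∈ Finset.range n, Set.Icc (a i) (b i))
    (γ : ℕ → ℝ)
    (P : ℕ → Ω → EuclideanSpace ℝ (Fin d) →L[ℝ] EuclideanSpace ℝ (Fin d))
    (hP0 : ∀ ω, P 0 ω = 0)
    (hPn : ∀ ω, P n ω = 1)
    (hγ : ∀ i, 0 < i → i < n → b (i - 1) < (γ i : EReal) ∧ (γ i : EReal) < a i)
    (hED : ∀ i, 0 < i → i < n → S.IsED (γ i) (P i)) :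
    ∀ᵐ ω ∂ℙ,
      DirectSum.IsInternal (fun i : Fin n =>
        LinearMap.range
          (P ((i : ℕ) + 1) ω : EuclideanSpace ℝ (Fin d) →ₗ[ℝ] EuclideanSpace ℝ (Fin d)) ⊓
          LinearMap.ker
          (P (i : ℕ) ω : EuclideanSpace ℝ (Fin d) →ₗ[ℝ] EuclideanSpace ℝ (Fin d))) ∧
      ∀ i : Fin n,
        LinearMap.range
          (P ((i : ℕ) + 1) ω : EuclideanSpace ℝ (Fin d) →ₗ[ℝ] EuclideanSpace ℝ (Fin d)) ⊓
          LinearMap.ker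
          (P (i : ℕ) ω : EuclideanSpace ℝ (Fin d) →ₗ[ℝ] EuclideanSpace ℝ (Fin d)) ≠ ⊥ := by
  classical
  -- the endpoints of the spectral intervals belong to the spectrum
  have hmema : ∀ i, i < n → ¬ S.AdmitsEDE (a i) := by
    intro i hi hA
    have : a i ∈ S.spectrum := by
      rw [hspec]
      exact Set.mem_biUnion (Finset.mem_range.2 hi) (Set.mem_Icc.2 ⟨le_refl _, hab i hi⟩)
    exact this hA
  have hmemb : ∀ i, i < n → ¬ S.AdmitsEDE (b i) := by
    intro i hi hA
    have : b i ∈ S.spectrum := by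
      rw [hspec]
      exact Set.mem_biUnion (Finset.mem_range.2 hi) (Set.mem_Icc.2 ⟨hab i hi, le_refl _⟩)
    exact this hA
  -- the dimension is positive
  have hd : 0 < d := by
    by_contra hdc
    have hd0 : d = 0 := by omega
    subst hd0
    exact hmema 0 hn (S.admitsEDE_dim_zero (a 0))
  -- ordering of the chosen growth rates
  have hγmono : ∀ i, 0 < i → i + 1 < n → γ i < γ (i + 1) := by
    intro i h0 h1
    have h2 := (hγ i h0 (by omega)).2
    have h3 := (hγ (i + 1) (by omega) h1).1
    have h4 := hab i (by omega)
    rw [Nat.add_sub_cancel] at h3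
    have : (γ i : EReal) < (γ (i + 1) : EReal) :=
      lt_trans (lt_of_lt_of_le h2 h4) h3
    exact_mod_cast this
  -- pointwise idempotence
  have hidem : ∀ j, j ≤ n → ∀ ω, P j ω * P j ω = P j ω := by
    intro j hj ω
    by_cases h0 : j = 0
    · subst h0; rw [hP0, mul_zero]
    by_cases hN : j = n
    · subst hN; rw [hPn, mul_one]
    · exact (hED j (by omega) (by omega)).1.2.1 ω
  -- consecutive products a.e.
  have hrel : ∀ᵐ ω ∂ℙ, ∀ i, i < n →
      (P (i + 1) ω * P i ω = P i ω ∧ P i ω * P (i + 1) ω = P i ω) := by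
    rw [MeasureTheory.ae_all_iff]
    intro i
    by_cases hi : i < n
    swap
    · filter_upwards with ω h; exact absurd h hi
    by_cases hi0 : i = 0
    · subst hi0
      filter_upwards with ω _
      rw [hP0, mul_zero, zero_mul]
      exact ⟨rfl, rfl⟩
    by_cases hin : i + 1 = n
    · filter_upwards with ω _
      rw [hin, hPn, one_mul, mul_one]
      exact ⟨rfl, rfl⟩
    · have h1 := hED i (by omega) hi
      have h2 := hED (i + 1) (by omega) (by omega)
      have hle : γ i ≤ γ (i + 1) := le_of_lt (hγmono i (by omega) (by omega))
      filter_upwards [S.nest h1 h2 hle] with ω hω _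
      exact hω
  -- a.e. constant ranks
  have hkex : ∀ i, ∃ k, (0 < i → i < n → ∀ᵐ ω ∂ℙ, clmRank (P i ω) = k) := by
    intro i
    by_cases hi : 0 < i ∧ i < n
    · obtain ⟨k, hk⟩ := S.rank_const hErg (hED i hi.1 hi.2).1
      exact ⟨k, fun _ _ => hk⟩
    · exact ⟨0, fun h1 h2 => absurd ⟨h1, h2⟩ hi⟩
  choose k hk using hkex
  set k' : ℕ → ℕ := fun i => if i = 0 then 0 else if i = n then d else k i with hk'
  have hkae : ∀ i, i ≤ n → ∀ᵐ ω ∂ℙ, clmRank (P i ω) = k' i := by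
    intro i hi
    by_cases hi0 : i = 0
    · subst hi0
      filter_upwards with ω
      rw [hP0, clmRank_zero]
      simp [hk']
    by_cases hin : i = n
    · subst hin
      filter_upwards with ω
      rw [hPn, clmRank_one]
      simp [hk', hi0]
    · have hkk : k' i = k i := by simp [hk', hi0, hin]
      rw [hkk]
      exact hk i (by omega) (by omega)
  -- strict monotonicity of the ranks
  have hklt : ∀ i, i < n → k' i < k' (i + 1) := by
    intro i hi
    by_contra hle
    push_neg at hle
    -- almost sure equality of consecutive projectors
    have heq : ∀ᵐ ω ∂ℙ, P i ω = P (i + 1) ω := by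
      filter_upwards [hrel, hkae i (le_of_lt hi), hkae (i + 1) hi] with ω hrelω hki hki1
      obtain ⟨h1, h2⟩ := hrelω i hi
      exact proj_eq (hidem i (le_of_lt hi) ω) (hidem (i + 1) hi ω) h1 h2
        (by rw [hki, hki1]; exact hle)
    by_cases hi0 : i = 0
    · subst hi0
      by_cases hn1 : 1 = n
      · -- then k' 1 = d ≤ k' 0 = 0, contradicting 0 < d
        have e1 : k' 1 = d := by simp [hk', ← hn1]
        have e0 : k' 0 = 0 := by simp [hk']
        rw [e1, e0] at hle
        omega
      · -- n ≥ 2 and P 1 is a.s. zero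
        have h0ae : ∀ᵐ ω ∂ℙ, P 1 ω = 0 := by
          filter_upwards [heq] with ω h
          rw [← h, hP0]
        apply hmema 0 (by omega)
        have hED1 := hED 1 one_pos (by omega)
        have hγ1 := hγ 1 one_pos (by omega)
        have hb0 : b 0 < (γ 1 : EReal) := by
          have := hγ1.1
          norm_num at this
          exact this
        have ha0 : a 0 < (γ 1 : EReal) := lt_of_le_of_lt (hab 0 (by omega)) hb0
        by_cases habot : a 0 = ⊥
        · exact Or.inr (Or.inr ⟨habot, γ 1, P 1, hED1, h0ae⟩)
        · have hatop : a 0 ≠ ⊤ := ne_top_of_lt ha0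
          set g : ℝ := (a 0).toReal with hg
          have hg0 : a 0 = (g : EReal) := (EReal.coe_toReal hatop habot).symm
          have hglt : g < γ 1 := by
            rw [hg0] at ha0
            exact_mod_cast ha0
          exact Or.inl ⟨g, hg0, S.admitsED_lt_of_ae_zero hED1 h0ae hglt⟩
    by_cases hin : i + 1 = n
    · -- P i is a.s. the identity
      have h1ae : ∀ᵐ ω ∂ℙ, P i ω = 1 := by
        filter_upwards [heq] with ω h
        rw [h, hin, hPn]
      apply hmemb i hi
      have hEDi := hED i (by omega) hi
      have hγi := (hγ i (by omega) hi).2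
      have hbi : (γ i : EReal) < b i := lt_of_lt_of_le hγi (hab i hi)
      by_cases hbtop : b i = ⊤
      · exact Or.inr (Or.inl ⟨hbtop, γ i, P i, hEDi, h1ae⟩)
      · have hbbot : b i ≠ ⊥ := ne_bot_of_gt hbi
        set g : ℝ := (b i).toReal with hg
        have hg0 : b i = (g : EReal) := (EReal.coe_toReal hbtop hbbot).symm
        have hglt : γ i < g := by
          rw [hg0] at hbi
          exact_mod_cast hbi
        exact Or.inl ⟨g, hg0, S.admitsED_gt_of_ae_one hEDi h1ae hglt⟩
    · -- middle case: the same projector gives dichotomies at two rates around `a i`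
      have hEDi := hED i (by omega) hi
      have hEDi1 := hED (i + 1) (by omega) (by omega)
      have hEDi1' : S.IsED (γ (i + 1)) (P i) := S.isED_congr hEDi1 hEDi.1 heq
      have h2 := (hγ i (by omega) hi).2
      have h3 := (hγ (i + 1) (by omega) (by omega)).1
      rw [Nat.add_sub_cancel] at h3
      have h4 := hab i hi
      have hai : (γ i : EReal) < a i := h2
      have hai1 : a i < (γ (i + 1) : EReal) := lt_of_le_of_lt h4 h3
      have hatop : a i ≠ ⊤ := ne_top_of_lt hai1
      have habot : a i ≠ ⊥ := ne_bot_of_gt hai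
      set g : ℝ := (a i).toReal with hg
      have hg0 : a i = (g : EReal) := (EReal.coe_toReal hatop habot).symm
      have hg1 : γ i ≤ g := by
        rw [hg0] at hai
        exact_mod_cast le_of_lt hai
      have hg2 : g ≤ γ (i + 1) := by
        rw [hg0] at hai1
        exact_mod_cast le_of_lt hai1
      exact absurd (Or.inl ⟨g, hg0, S.admitsED_between hEDi hEDi1' hg1 hg2⟩)
        (hmema i hi)
  -- combine everything on a single full-measure set
  have hkaeAll : ∀ᵐ ω ∂ℙ, ∀ i, i ≤ n → clmRank (P i ω) = k' i := by
    rw [MeasureTheory.ae_all_iff]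
    intro i
    by_cases hi : i ≤ n
    · filter_upwards [hkae i hi] with ω h _
      exact h
    · filter_upwards with ω h
      exact absurd h hi
  filter_upwards [hrel, hkaeAll] with ω hrelω hkω
  exact chain_internal n (fun i => P i ω) (hP0 ω) (hPn ω)
    (fun i hi => hidem i hi ω) (fun i hi => hrelω i hi)
    (fun i hi => by
      rw [hkω i (le_of_lt hi), hkω (i + 1) hi]
      exact hklt i hi)

end
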